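/- Let F ∈ B_c(T) be real-valued and let n be a nonzero integer. Then |f̂(n)| ≤ 2√2·|n|·‖f − τ_{π/n} f‖_T, where ‖f − τ_{π/n} f‖_T = sup{ |(F(β) − F(β − π/n)) − (F(α) − F(α − π/n))| : α ≤ β ≤ α + 2π } is the Alexiewicz norm of the difference between f and its translate by π/n. -/

import Mathlib

open MeasureTheory Real

/-- For real-valued `F ∈ B_c(𝕋)` and nonzero `n ∈ ℤ`,
`|f̂(n)| ≤ 2√2 |n| ‖f − τ_{π/n} f‖_𝕋`, where the Alexiewicz norm of the
difference is expressed via the primitive `F`. -/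
theorem fourier_coeff_le_translate_alexiewicz (F : ℝ → ℝ)
    (hFcont : Continuous F) (hF0 : F (-π) = 0)
    (hFper : ∀ x : ℝ, F (x + 2 * π) = F x + F π)
    (n : ℤ) (hn : n ≠ 0) :
    ‖((-1 : ℂ) ^ n * (F π : ℂ)
        + Complex.I * (n : ℂ) *
          ∫ t in (-π)..π, (F t : ℂ) * Complex.exp (-Complex.I * (n : ℂ) * (t : ℂ)))‖
      ≤ 2 * Real.sqrt 2 * |(n : ℝ)| *
        sSup {r : ℝ | ∃ α β : ℝ, α ≤ β ∧ β ≤ α + 2 * π ∧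
          r = |(F β - F (β - π / (n : ℝ))) - (F α - F (α - π / (n : ℝ)))|} := by
  have hn' : (n:ℝ) ≠ 0 := Int.cast_ne_zero.mpr hn
  have hpi := Real.pi_pos
  set s : ℝ := π / (n:ℝ) with hs
  have hns : (n:ℝ) * s = π := by rw [hs]; field_simp
  set H : ℝ → ℝ := fun x => F x - F (x - s) with hHdef
  have hHcont : Continuous H :=
    hFcont.sub (hFcont.comp (continuous_id.sub continuous_const))
  have hHper : Function.Periodic H (2*π) := by
    intro x
    have h2 : x + 2*π - s = x - s + 2*π := by ring
    simp only [hHdef, h2, hFper x, hFper (x - s)]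
    ring
  set M : ℝ := sSup {r : ℝ | ∃ α β : ℝ, α ≤ β ∧ β ≤ α + 2 * π ∧
          r = |(F β - F (β - s)) - (F α - F (α - s))|} with hMdef
  -- boundedness of H
  obtain ⟨C, hC⟩ : ∃ C, ∀ x, |H x| ≤ C := by
    obtain ⟨C, hC⟩ := (isCompact_Icc (a := (0:ℝ)) (b := 2*π)).exists_bound_of_continuousOn
      hHcont.continuousOn
    refine ⟨C, fun x => ?_⟩
    obtain ⟨y, hy, hxy⟩ := hHper.exists_mem_Ico₀ (by positivity) x
    rw [hxy]
    simpa [Real.norm_eq_abs] using hC y (Set.mem_Icc_of_Ico hy)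
  have hSbdd : BddAbove {r : ℝ | ∃ α β : ℝ, α ≤ β ∧ β ≤ α + 2 * π ∧
          r = |(F β - F (β - s)) - (F α - F (α - s))|} := by
    refine ⟨2*C, fun r hr => ?_⟩
    obtain ⟨α, β, -, -, rfl⟩ := hr
    have h1 : |(F β - F (β - s)) - (F α - F (α - s))| = |H β - H α| := by
      simp only [hHdef]
    rw [h1]
    calc |H β - H α| ≤ |H β| + |H α| := abs_sub _ _
    _ ≤ C + C := add_le_add (hC β) (hC α)
    _ = 2*C := by ring
  have hM0 : 0 ≤ M := by
    rw [hMdef]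
    apply le_csSup hSbdd
    exact ⟨0, 0, le_refl 0, by linarith, by simp⟩
  have hMle : ∀ α β : ℝ, α ≤ β → β ≤ α + 2*π → |H β - H α| ≤ M := by
    intro α β h1 h2
    rw [hMdef]
    apply le_csSup hSbdd
    exact ⟨α, β, h1, h2, by simp only [hHdef]⟩
  -- max and min of H on [-π, π]
  have hIcc : ((-π:ℝ)) ≤ π := by linarith
  obtain ⟨u, hu, hu'⟩ := isCompact_Icc.exists_isMaxOn (Set.nonempty_Icc.mpr hIcc)
    hHcont.continuousOn
  obtain ⟨v, hv, hv'⟩ := isCompact_Icc.exists_isMinOn (Set.nonempty_Icc.mpr hIcc)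
    hHcont.continuousOn
  set c : ℝ := (H u + H v)/2 with hcdef
  have hvu : H v ≤ H u := hv' hu
  have hosc : H u - H v ≤ M := by
    rcases le_total v u with h | h
    · have := hMle v u h (by
        rcases hu with ⟨hu1, hu2⟩; rcases hv with ⟨hv1, hv2⟩; linarith)
      calc H u - H v ≤ |H u - H v| := le_abs_self _
      _ ≤ M := this
    · have := hMle u v h (by
        rcases hu with ⟨hu1, hu2⟩; rcases hv with ⟨hv1, hv2⟩; linarith)
      calc H u - H v ≤ |H v - H u| := by rw [abs_sub_comm]; exact le_abs_self _
      _ ≤ M := this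
  clear_value s H M c
  have hc : ∀ t ∈ Set.Icc (-π) π, |H t - c| ≤ M/2 := by
    intro t ht
    have h1 : H t ≤ H u := hu' ht
    have h2 : H v ≤ H t := hv' ht
    rw [abs_le]
    constructor <;> linarith [hosc, hcdef]
  clear hvu hosc hu' hv' hu hv hcdef hC hSbdd
  -- ### Complex part
  set e : ℝ → ℂ := fun t => Complex.exp (-Complex.I * (n : ℂ) * (t : ℂ)) with hedef
  set c₀ : ℂ := -Complex.I * (n : ℂ) with hc₀def
  have hc₀ : c₀ ≠ 0 := by
    simp [hc₀def, Complex.I_ne_zero, hn]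
  have he_eq : ∀ t : ℝ, e t = Complex.exp (c₀ * t) := by
    intro t; rw [hedef]
  have hecont : Continuous e := by
    simp only [hedef]
    exact Complex.continuous_exp.comp (by continuity)
  have hns' : (n : ℂ) * (s : ℂ) = (π : ℂ) := by
    rw [← Complex.ofReal_intCast, ← Complex.ofReal_mul, hns]
  have hinv : ((-1 : ℂ) ^ n)⁻¹ = (-1 : ℂ) ^ n := by
    rw [← inv_zpow, inv_neg_one]
  have hexp_pi : Complex.exp (c₀ * (π:ℂ)) = (-1 : ℂ) ^ n := by
    have h1 : c₀ * (π:ℂ) = -((n:ℂ) * ((π:ℂ) * Complex.I)) := by rw [hc₀def]; ring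
    rw [h1, Complex.exp_neg, Complex.exp_int_mul, Complex.exp_pi_mul_I, hinv]
  have hexp_s : Complex.exp (c₀ * (s:ℂ)) = -1 := by
    have h1 : c₀ * (s:ℂ) = -((π:ℂ) * Complex.I) := by
      rw [hc₀def, show -Complex.I * (n:ℂ) * (s:ℂ) = -(((n:ℂ) * (s:ℂ)) * Complex.I) by ring, hns']
    rw [h1, Complex.exp_neg, Complex.exp_pi_mul_I, inv_neg_one]
  have he_shift : ∀ t : ℝ, e (t + s) = -e t := by
    intro t
    rw [he_eq, he_eq, Complex.ofReal_add, mul_add, Complex.exp_add, hexp_s]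
    ring
  have he_per : ∀ t : ℝ, e (t - 2*π) = e t := by
    intro t
    rw [he_eq, he_eq]
    have h1 : c₀ * ((t:ℝ) - 2*π : ℝ) = c₀ * t + (n:ℂ) * (2 * (π:ℂ) * Complex.I) := by
      push_cast
      rw [hc₀def]; ring
    rw [h1, Complex.exp_add, Complex.exp_int_mul_two_pi_mul_I, mul_one]
  have habs_e : ∀ t : ℝ, ‖e t‖ = 1 := by
    intro t
    have h1 : (-Complex.I * (n:ℂ) * (t:ℂ)) = ((-(n:ℝ) * t : ℝ) : ℂ) * Complex.I := by
      push_cast; ring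
    rw [hedef, hc₀def]
    simp only [h1]
    exact Complex.norm_exp_ofReal_mul_I _
  have hexp_negpi : Complex.exp (c₀ * ((-π:ℝ):ℂ)) = (-1 : ℂ) ^ n := by
    rw [Complex.ofReal_neg, mul_neg, Complex.exp_neg, hexp_pi, hinv]
  have hintE : ∀ a b : ℝ, (∫ t in a..b, e t)
      = (Complex.exp (c₀ * b) - Complex.exp (c₀ * a)) / c₀ := by
    intro a b
    simp_rw [he_eq]
    exact integral_exp_mul_complex hc₀
  have hE0 : (∫ t in (-π)..π, e t) = 0 := by
    rw [hintE, hexp_pi, hexp_negpi, sub_self, zero_div]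
  have hK : (∫ t in (π - s)..π, e t) = 2 * (-1:ℂ)^n / c₀ := by
    rw [hintE, hexp_pi]
    have h1 : Complex.exp (c₀ * ((π - s : ℝ) : ℂ)) = -(-1:ℂ)^n := by
      rw [Complex.ofReal_sub, mul_sub, Complex.exp_sub, hexp_pi, hexp_s]
      ring
    rw [h1]
    ring
  clear_value e c₀
  -- integrability
  have hFe_cont : Continuous fun t : ℝ => (F t : ℂ) * e t :=
    (Complex.continuous_ofReal.comp hFcont).mul hecont
  have hFi : ∀ a b : ℝ, IntervalIntegrable (fun t : ℝ => (F t : ℂ) * e t) volume a b :=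
    fun a b => hFe_cont.intervalIntegrable a b
  have hFsi : ∀ a b : ℝ, IntervalIntegrable (fun t : ℝ => (F (t - s) : ℂ) * e t) volume a b := by
    intro a b
    exact (((Complex.continuous_ofReal.comp hFcont).comp
      (continuous_id.sub continuous_const)).mul hecont).intervalIntegrable a b
  have hEi : ∀ a b : ℝ, IntervalIntegrable e volume a b :=
    fun a b => hecont.intervalIntegrable a b
  -- the substitution t ↦ t - s flips the exponential
  have hJ : (∫ t in (-π)..π, (F (t - s) : ℂ) * e t)
      = -∫ t in (-π - s)..(π - s), (F t : ℂ) * e t := by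
    have h1 : ∀ t : ℝ, (F (t - s) : ℂ) * e t = (fun u : ℝ => -((F u : ℂ) * e u)) (t - s) := by
      intro t
      have h2 := he_shift (t - s)
      rw [show t - s + s = t by ring] at h2
      simp only [h2]
      ring
    simp_rw [h1]
    rw [intervalIntegral.integral_comp_sub_right (fun u : ℝ => -((F u : ℂ) * e u)) s,
      intervalIntegral.integral_neg]
  -- wrap-around using quasi-periodicity
  have hwrap : (∫ t in (-π - s)..(-π), (F t : ℂ) * e t)
      = (∫ t in (π - s)..π, (F t : ℂ) * e t) - (F π : ℂ) * (2 * (-1:ℂ)^n / c₀) := by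
    have h1 := intervalIntegral.integral_comp_sub_right (a := π - s) (b := π)
      (fun u : ℝ => (F u : ℂ) * e u) (2*π)
    have h2 : ∀ t : ℝ, (F (t - 2*π) : ℂ) * e (t - 2*π) = (F t : ℂ) * e t - (F π : ℂ) * e t := by
      intro t
      have h3 : F t = F (t - 2*π) + F π := by
        have h4 := hFper (t - 2*π)
        rw [show t - 2*π + 2*π = t by ring] at h4
        linarith
      have h5 : (F (t - 2*π) : ℂ) = (F t : ℂ) - (F π : ℂ) := by
        rw [h3]; push_cast; ring
      rw [he_per, h5]
      ring
    simp only [h2] at h1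
    rw [show π - s - 2*π = -π - s by ring, show π - 2*π = -π by ring] at h1
    rw [← h1, intervalIntegral.integral_sub (g := fun t : ℝ => (F π : ℂ) * e t) (hFi _ _)
      ((continuous_const.mul hecont).intervalIntegrable _ _),
      intervalIntegral.integral_const_mul, hK]
  have hsplit1 : (∫ t in (-π - s)..(π - s), (F t : ℂ) * e t)
      = (∫ t in (-π - s)..(-π), (F t : ℂ) * e t) + ∫ t in (-π)..(π - s), (F t : ℂ) * e t :=
    (intervalIntegral.integral_add_adjacent_intervals (hFi _ _) (hFi _ _)).symm
  have hsplit2 : (∫ t in (-π)..π, (F t : ℂ) * e t)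
      = (∫ t in (-π)..(π - s), (F t : ℂ) * e t) + ∫ t in (π - s)..π, (F t : ℂ) * e t :=
    (intervalIntegral.integral_add_adjacent_intervals (hFi _ _) (hFi _ _)).symm
  have hHe : (∫ t in (-π)..π, ((H t : ℝ) : ℂ) * e t)
      = (∫ t in (-π)..π, (F t : ℂ) * e t) - ∫ t in (-π)..π, (F (t - s) : ℂ) * e t := by
    rw [← intervalIntegral.integral_sub (hFi _ _) (hFsi _ _)]
    congr 1
    funext t
    rw [hHdef]
    push_cast
    ring
  have hfin : (∫ t in (-π)..π, ((H t : ℝ) : ℂ) * e t)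
      = 2 * (∫ t in (-π)..π, (F t : ℂ) * e t) - (F π : ℂ) * (2 * (-1:ℂ)^n / c₀) := by
    rw [hHe, hJ, hsplit1, hwrap, hsplit2]
    ring
  have key2 : (2:ℂ) * ((-1 : ℂ) ^ n * (F π : ℂ)
        + Complex.I * (n : ℂ) * ∫ t in (-π)..π, (F t : ℂ) * e t)
      = Complex.I * (n : ℂ) * ∫ t in (-π)..π, ((H t - c : ℝ) : ℂ) * e t := by
    have hHce : (∫ t in (-π)..π, ((H t - c : ℝ) : ℂ) * e t)
        = ∫ t in (-π)..π, ((H t : ℝ) : ℂ) * e t := by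
      have h1 : ∀ t : ℝ, ((H t - c : ℝ) : ℂ) * e t = ((H t : ℝ) : ℂ) * e t - (c : ℂ) * e t := by
        intro t; push_cast; ring
      have hi1 : IntervalIntegrable (fun t : ℝ => ((H t : ℝ) : ℂ) * e t) volume (-π) π :=
        ((Complex.continuous_ofReal.comp hHcont).mul hecont).intervalIntegrable _ _
      have hi2 : IntervalIntegrable (fun t : ℝ => (c : ℂ) * e t) volume (-π) π :=
        (continuous_const.mul hecont).intervalIntegrable _ _
      simp_rw [h1]
      rw [intervalIntegral.integral_sub hi1 hi2,
        intervalIntegral.integral_const_mul, hE0, mul_zero, sub_zero]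
    have hnC : (n : ℂ) ≠ 0 := Int.cast_ne_zero.mpr hn
    rw [hHce, hfin, hc₀def]
    field_simp [Complex.I_ne_zero, hnC]
    ring
  -- ### Norm bound
  have hbound : ‖(∫ t in (-π)..π, ((H t - c : ℝ) : ℂ) * e t)‖
      ≤ M/2 * |π - (-π)| := by
    apply intervalIntegral.norm_integral_le_of_norm_le_const
    intro x hx
    rw [Set.uIoc_of_le hIcc] at hx
    have hx' : x ∈ Set.Icc (-π) π := ⟨le_of_lt hx.1, hx.2⟩
    rw [norm_mul, Complex.norm_real, habs_e, mul_one,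
      Real.norm_eq_abs]
    exact hc x hx'
  have habs2 := congrArg norm key2
  rw [norm_mul, norm_mul, norm_mul, Complex.norm_two, Complex.norm_I, Complex.norm_intCast,
    one_mul] at habs2
  have h2pi : |π - (-π)| = 2*π := by
    rw [abs_of_pos (by linarith)]; ring
  rw [h2pi] at hbound
  have hsqrt : (1:ℝ) ≤ Real.sqrt 2 := by
    rw [show (1:ℝ) = Real.sqrt 1 by simp]
    exact Real.sqrt_le_sqrt (by norm_num)
  have hfinal : ‖((-1 : ℂ) ^ n * (F π : ℂ)
      + Complex.I * (n : ℂ) * ∫ t in (-π)..π, (F t : ℂ) * e t)‖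
      ≤ 2 * Real.sqrt 2 * |(n : ℝ)| * M := by
    have s2 : |(n:ℝ)| * ‖(∫ t in (-π)..π, ((H t - c : ℝ) : ℂ) * e t)‖
        ≤ |(n:ℝ)| * (M/2*(2*π)) := mul_le_mul_of_nonneg_left hbound (abs_nonneg _)
    nlinarith [habs2, hsqrt, Real.pi_le_four, mul_nonneg (abs_nonneg ((n:ℝ))) hM0]
  simp only [hedef] at hfinal
  exact hfinal
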